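/- arXiv:1310.0755 — 2 statements merged into one kernel-verified Lean document; each statement's English description precedes it below -/
import Mathlib

section
/- For every skew-Hermitian matrix A in 𝔲(m) with operator norm ‖A‖ ≤ π, the matrix exponential satisfies ‖exp(A) − Id‖ = 2·sin(‖A‖/2). -/
open ContinuousLinearMap

private theorem ptwise (t : ℝ) (h : |t| ≤ Real.pi) :
    ‖Complex.exp ((t : ℂ) * Complex.I) - 1‖ = 2 * Real.sin (|t| / 2) := by
  have hs : Real.sin (|t| / 2) ≥ 0 := Real.sin_nonneg_of_nonneg_of_le_pi
    (by positivity) (by linarith [abs_nonneg t])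
  have habs : Real.sin (|t| / 2) ^ 2 = Real.sin (t / 2) ^ 2 := by
    rcases abs_cases t with ⟨h', _⟩ | ⟨h', _⟩ <;> rw [h']
    simp [neg_div, Real.sin_neg]
  have h1 : ‖Complex.exp ((t : ℂ) * Complex.I) - 1‖ ^ 2 = (2 * Real.sin (|t| / 2)) ^ 2 := by
    rw [Complex.sq_norm, Complex.normSq_apply]
    simp [Complex.exp_re, Complex.exp_im, Complex.sub_re, Complex.sub_im]
    have hc : Real.cos t = 1 - 2 * Real.sin (t / 2) ^ 2 := by
      have := Real.cos_two_mul' (t / 2)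
      have h2 := Real.sin_sq_add_cos_sq (t / 2)
      rw [show 2 * (t / 2) = t by ring] at this
      linarith
    nlinarith [Real.sin_sq_add_cos_sq t]
  nlinarith [norm_nonneg (Complex.exp ((t : ℂ) * Complex.I) - 1)]

/-- For a skew-Hermitian operator `A` on `ℂ^m` with operator norm `‖A‖ ≤ π`,
`‖exp A - Id‖ = 2 sin(‖A‖/2)`. -/
theorem stmt_0 (m : ℕ)
    (A : EuclideanSpace ℂ (Fin m) →L[ℂ] EuclideanSpace ℂ (Fin m))
    (hskew : ContinuousLinearMap.adjoint A = -A)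
    (hnorm : ‖A‖ ≤ Real.pi) :
    ‖NormedSpace.exp A - 1‖ = 2 * Real.sin (‖A‖ / 2) := by
  set E := EuclideanSpace ℂ (Fin m)
  rcases subsingleton_or_nontrivial (E →L[ℂ] E) with hsub | hnt
  · have h0 : A = 0 := Subsingleton.elim _ _
    have h1 : NormedSpace.exp A - 1 = 0 := Subsingleton.elim _ _
    rw [h1, h0, norm_zero, zero_div, Real.sin_zero, mul_zero]
  · have hstar : star A = -A := by rw [ContinuousLinearMap.star_eq_adjoint, hskew]
    have hA : IsStarNormal A := ⟨by rw [hstar]; exact (Commute.refl A).neg_left⟩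
    -- spectrum is purely imaginary
    have hre : ∀ z ∈ spectrum ℂ A, z.re = 0 := by
      intro z hz
      have hsa : IsSelfAdjoint (Complex.I • A) := by
        rw [IsSelfAdjoint, star_smul, hstar, Complex.star_def, Complex.conj_I]
        simp
      have hmem : Complex.I • z ∈ spectrum ℂ (Complex.I • A) := by
        have := (spectrum.smul_mem_smul_iff
          (r := Units.mk0 Complex.I Complex.I_ne_zero) (a := A) (s := z)).mpr hz
        simpa [Units.smul_def] using this
      have := hsa.im_eq_zero_of_mem_spectrum hmem
      simpa [Complex.smul_re] using this
    -- norms of spectrum elements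
    have hle : ∀ z ∈ spectrum ℂ A, ‖z‖ ≤ ‖A‖ := fun z hz =>
      spectrum.norm_le_norm_of_mem hz
    have hnormz : ∀ z ∈ spectrum ℂ A, ‖z‖ = |z.im| := by
      intro z hz
      rw [Complex.norm_def, Complex.normSq_apply, hre z hz]
      rw [show (0:ℝ) * 0 + z.im * z.im = z.im ^ 2 by ring, Real.sqrt_sq_eq_abs]
    have hval : ∀ z ∈ spectrum ℂ A, ‖Complex.exp z - 1‖ = 2 * Real.sin (‖z‖ / 2) := by
      intro z hz
      have hzI : z = (z.im : ℂ) * Complex.I := by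
        apply Complex.ext <;> simp [hre z hz]
      rw [hnormz z hz]
      calc ‖Complex.exp z - 1‖ = ‖Complex.exp ((z.im : ℂ) * Complex.I) - 1‖ := by rw [← hzI]
        _ = 2 * Real.sin (|z.im| / 2) := ptwise z.im (by
              rw [← hnormz z hz]; exact (hle z hz).trans hnorm)
    -- spectral radius attained
    obtain ⟨z0, hz0mem, hz0⟩ := spectrum.exists_nnnorm_eq_spectralRadius A
    rw [IsStarNormal.spectralRadius_eq_nnnorm A] at hz0
    have hz0n : ‖z0‖ = ‖A‖ := by
      have := ENNReal.coe_inj.mp hz0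
      exact congrArg NNReal.toReal this
    -- cfc representation
    have hcfc : NormedSpace.exp A - 1 = cfc (fun z : ℂ => Complex.exp z - 1) A := by
      rw [cfc_sub (fun z : ℂ => Complex.exp z) (fun _ : ℂ => (1 : ℂ)) A,
        cfc_const_one ℂ A, CFC.complex_exp_eq_normedSpace_exp]
    have hgreat := IsGreatest.norm_cfc (fun z : ℂ => Complex.exp z - 1) A
    rw [hcfc]
    refine (hgreat.unique ?_)
    constructor
    · exact ⟨z0, hz0mem, by simp only; rw [hval z0 hz0mem, hz0n]⟩
    · rintro x ⟨z, hz, rfl⟩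
      simp only
      rw [hval z hz]
      have hzpi := (hle z hz).trans hnorm
      have h1 : ‖z‖ / 2 ∈ Set.Icc (-(Real.pi / 2)) (Real.pi / 2) := by
        constructor <;> [linarith [norm_nonneg z, Real.pi_pos]; linarith]
      have h2 : ‖A‖ / 2 ∈ Set.Icc (-(Real.pi / 2)) (Real.pi / 2) := by
        constructor <;> [linarith [norm_nonneg A, Real.pi_pos]; linarith]
      have := Real.strictMonoOn_sin.monotoneOn h1 h2 (by linarith [hle z hz])
      linarith
end

section
/- The map exp restricted to {A ∈ 𝔲(m) : ‖A‖ < 1/2} is injective with image contained in {B ∈ U(m) : ‖B − Id‖ < 2 sin(1/4)}, and every B ∈ U(m) with ‖B − Id‖ < 2 sin(1/4) is exp(A) for a unique A with ‖A‖ < 1/2. -/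
open Complex NormedSpace ContinuousLinearMap


set_option synthInstance.maxHeartbeats 1000000
set_option linter.unusedSectionVars false
set_option maxHeartbeats 1000000
open Pointwise

lemma abs_exp_I_mul_sub_one {θ : ℝ} (hθ : |θ| ≤ Real.pi) :
    ‖Complex.exp (θ * I) - 1‖ = 2 * Real.sin (|θ| / 2) := by
  have hsin : |Real.sin (θ / 2)| = Real.sin (|θ| / 2) := by
    rcases abs_cases θ with ⟨h1, h2⟩ | ⟨h1, h2⟩
    · rw [h1] at hθ ⊢
      exact abs_of_nonneg (Real.sin_nonneg_of_nonneg_of_le_pi (by linarith) (by linarith))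
    · rw [h1] at hθ ⊢
      rw [show -θ / 2 = -(θ / 2) by ring, Real.sin_neg]
      exact abs_of_nonpos (Real.sin_nonpos_of_nonpos_of_neg_pi_le (by linarith) (by linarith))
  have key : Complex.exp (θ * I) - 1 = ((Real.cos θ - 1 : ℝ) : ℂ) + ((Real.sin θ : ℝ) : ℂ) * I := by
    rw [Complex.exp_mul_I]
    push_cast
    ring
  rw [key, Complex.norm_add_mul_I]
  have hid : (Real.cos θ - 1) ^ 2 + Real.sin θ ^ 2 = (2 * Real.sin (|θ| / 2)) ^ 2 := by
    have h1 : Real.cos (2 * (θ / 2)) = Real.cos (θ / 2) ^ 2 - Real.sin (θ / 2) ^ 2 :=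
      Real.cos_two_mul' _
    rw [show 2 * (θ / 2) = θ by ring] at h1
    have h2 := Real.sin_sq_add_cos_sq θ
    have h4 := Real.sin_sq_add_cos_sq (θ / 2)
    have h3 : Real.sin (|θ| / 2) ^ 2 = Real.sin (θ / 2) ^ 2 := by rw [← hsin]; exact sq_abs _
    nlinarith
  rw [hid, Real.sqrt_sq (by nlinarith [Real.sin_nonneg_of_nonneg_of_le_pi (by positivity : (0:ℝ) ≤ |θ| / 2) (by linarith [abs_nonneg θ] : |θ| / 2 ≤ Real.pi)])]

variable {m : ℕ} [Nontrivial (EuclideanSpace ℂ (Fin m))]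

local notation "𝓐" => EuclideanSpace ℂ (Fin m) →L[ℂ] EuclideanSpace ℂ (Fin m)

lemma skew_star {A : 𝓐} (hA : ContinuousLinearMap.adjoint A = -A) : star A = -A :=
  (ContinuousLinearMap.star_eq_adjoint A).trans hA

lemma isStarNormal_of_skew {A : 𝓐} (hA : ContinuousLinearMap.adjoint A = -A) :
    IsStarNormal A :=
  ⟨by rw [skew_star hA]; exact (Commute.refl A).neg_left⟩

lemma isStarNormal_of_unitary {B : 𝓐} (hB : B ∈ unitary 𝓐) : IsStarNormal B := by
  rw [Unitary.mem_iff] at hB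
  exact ⟨hB.1.trans hB.2.symm⟩

lemma re_eq_zero_of_skew {A : 𝓐} (hA : ContinuousLinearMap.adjoint A = -A)
    {z : ℂ} (hz : z ∈ spectrum ℂ A) : z.re = 0 := by
  have hsa : IsSelfAdjoint ((-I : ℂ) • A) := by
    rw [IsSelfAdjoint, star_smul, skew_star hA]
    rw [star_neg, Complex.star_def, Complex.conj_I, neg_neg, smul_neg, ← neg_smul]
  have hu : (-I : ℂ) ≠ 0 := by simp [I_ne_zero]
  have hmem : (-I) * z ∈ spectrum ℂ ((-I : ℂ) • A) := by
    have : ((-I : ℂ) • A) = (Units.mk0 (-I) hu : ℂˣ) • A := rfl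
    rw [this, spectrum.unit_smul_eq_smul]
    exact Set.smul_mem_smul_set hz
  have h := hsa.mem_spectrum_eq_re hmem
  have him : ((-I) * z).im = 0 := by rw [h]; simp
  simpa using him

lemma cfc_log_exp {A : 𝓐} (hN : IsStarNormal A) (hn : ‖A‖ < 1 / 2) :
    cfc Complex.log (NormedSpace.exp A) = A := by
  have him : ∀ z ∈ spectrum ℂ A, |z.im| < 1 / 2 := fun z hz => by
    have h1 : |z.im| ≤ ‖z‖ := Complex.abs_im_le_norm z
    have h2 : ‖z‖ ≤ ‖A‖ := spectrum.norm_le_norm_of_mem hz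
    linarith
  have hpi := Real.pi_gt_three
  have hg : ContinuousOn Complex.log (Complex.exp '' spectrum ℂ A) := by
    rintro w ⟨z, hz, rfl⟩
    refine (continuousAt_clog ?_).continuousWithinAt
    rw [Complex.mem_slitPlane_iff]
    left
    rw [Complex.exp_re]
    have := him z hz
    have habs := abs_lt.mp this
    exact mul_pos (Real.exp_pos _)
      (Real.cos_pos_of_mem_Ioo ⟨by linarith, by linarith⟩)
  rw [← CFC.complex_exp_eq_normedSpace_exp hN,
    ← cfc_comp' Complex.log Complex.exp A hg Complex.continuous_exp.continuousOn hN]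
  calc cfc (Complex.log <| Complex.exp ·) A = cfc (id : ℂ → ℂ) A := by
        refine cfc_congr fun z hz => ?_
        have := abs_lt.mp (him z hz)
        exact Complex.log_exp (by linarith) (by linarith)
    _ = A := cfc_id ℂ A hN

lemma norm_exp_sub_one_lt {A : 𝓐} (hA : ContinuousLinearMap.adjoint A = -A)
    (hn : ‖A‖ < 1 / 2) :
    ‖NormedSpace.exp A - 1‖ < 2 * Real.sin (1 / 4) := by
  have hN := isStarNormal_of_skew hA
  have hpi := Real.pi_gt_three
  have hrw : NormedSpace.exp A - 1 = cfc (fun z => Complex.exp z - 1) A := by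
    rw [cfc_sub (fun z => Complex.exp z) (fun _ => (1 : ℂ)) A
      Complex.continuous_exp.continuousOn continuousOn_const,
      cfc_const 1 A hN, map_one, CFC.complex_exp_eq_normedSpace_exp hN]
  rw [hrw]
  refine norm_cfc_lt (by exact mul_pos two_pos (Real.sin_pos_of_pos_of_lt_pi (by norm_num) (by linarith))) fun z hz => ?_
  have hre : z.re = 0 := re_eq_zero_of_skew hA hz
  have him : |z.im| < 1 / 2 := by
    have h1 : |z.im| ≤ ‖z‖ := Complex.abs_im_le_norm z
    have h2 : ‖z‖ ≤ ‖A‖ := spectrum.norm_le_norm_of_mem hz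
    linarith
  have hz_eq : z = (z.im : ℝ) * Complex.I := by
    apply Complex.ext <;> simp [hre]
  rw [hz_eq, abs_exp_I_mul_sub_one (by linarith)]
  have hlt : Real.sin (|z.im| / 2) < Real.sin (1 / 4) := by
    apply Real.sin_lt_sin_of_lt_of_le_pi_div_two (by linarith [abs_nonneg z.im, Real.pi_pos]) (by linarith) (by linarith)
  linarith

lemma part3_props {B : 𝓐} (hB : B ∈ unitary 𝓐) (hBn : ‖B - 1‖ < 2 * Real.sin (1 / 4)) :
    ContinuousLinearMap.adjoint (cfc Complex.log B) = -(cfc Complex.log B) ∧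
    ‖cfc Complex.log B‖ < 1 / 2 ∧ NormedSpace.exp (cfc Complex.log B) = B := by
  have hpi := Real.pi_gt_three
  have hNB : IsStarNormal B := isStarNormal_of_unitary hB
  have habs : ∀ z ∈ spectrum ℂ B, ‖z‖ = 1 := fun z hz => by
    have := spectrum.subset_circle_of_unitary hB hz
    rwa [Metric.mem_sphere, Complex.dist_eq, sub_zero] at this
  have hdist : ∀ z ∈ spectrum ℂ B, ‖z - 1‖ ≤ ‖B - 1‖ := fun z hz => by
    have hmem : z - 1 ∈ spectrum ℂ B - {(1 : ℂ)} := Set.sub_mem_sub hz rfl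
    rw [spectrum.sub_singleton_eq, map_one] at hmem
    have := spectrum.norm_le_norm_of_mem hmem
    exact this
  have hexpz : ∀ z ∈ spectrum ℂ B, Complex.exp (Complex.arg z * Complex.I) = z := fun z hz => by
    conv_rhs => rw [← Complex.norm_mul_exp_arg_mul_I z]
    rw [habs z hz, Complex.ofReal_one, one_mul]
  have harg : ∀ z ∈ spectrum ℂ B, |Complex.arg z| < 1 / 2 := fun z hz => by
    have hb : |Complex.arg z| ≤ Real.pi :=
      abs_le.mpr ⟨(Complex.neg_pi_lt_arg z).le, Complex.arg_le_pi z⟩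
    have h1 : 2 * Real.sin (|Complex.arg z| / 2) ≤ ‖B - 1‖ := by
      rw [← abs_exp_I_mul_sub_one hb, hexpz z hz]
      exact hdist z hz
    by_contra hcon
    push_neg at hcon
    have h2 : Real.sin (1 / 4) ≤ Real.sin (|Complex.arg z| / 2) := by
      rcases eq_or_lt_of_le (show (1:ℝ)/4 ≤ |Complex.arg z| / 2 by linarith) with h | h
      · rw [h]
      · exact (Real.sin_lt_sin_of_lt_of_le_pi_div_two (by linarith) (by linarith) h).le
    linarith
  have hlog : ∀ z ∈ spectrum ℂ B, Complex.log z = (Complex.arg z : ℂ) * Complex.I :=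
    fun z hz => by
      rw [Complex.log, habs z hz, Real.log_one, Complex.ofReal_zero, zero_add]
  refine ⟨?_, ?_, ?_⟩
  · rw [← ContinuousLinearMap.star_eq_adjoint, ← cfc_star Complex.log B,
      ← cfc_neg Complex.log B]
    refine cfc_congr fun z hz => ?_
    rw [hlog z hz]
    simp [Complex.star_def, Complex.conj_I]
  · refine norm_cfc_lt (by norm_num) fun z hz => ?_
    rw [hlog z hz, norm_mul, Complex.norm_I, Complex.norm_real, Real.norm_eq_abs, mul_one]
    exact harg z hz
  · have hAn : IsStarNormal (cfc Complex.log B) := cfc_predicate _ B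
    have hsin14 : Real.sin (1 / 4) < 1 / 4 := Real.sin_lt (by norm_num)
    have hlogcont : ContinuousOn Complex.log (spectrum ℂ B) := by
      intro z hz
      refine (continuousAt_clog ?_).continuousWithinAt
      rw [Complex.mem_slitPlane_iff]
      left
      have e1 : ‖z - 1‖ ^ 2 = (z.re - 1) ^ 2 + z.im ^ 2 := by
        rw [Complex.sq_norm, Complex.normSq_apply]
        simp [Complex.sub_re, Complex.sub_im]
        ring
      have e2 : z.re ^ 2 + z.im ^ 2 = 1 := by
        have := Complex.sq_norm z
        rw [habs z hz, Complex.normSq_apply] at this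
        nlinarith
      have h3 : ‖z - 1‖ < 1 / 2 := lt_of_le_of_lt (hdist z hz) (by linarith)
      nlinarith [norm_nonneg (z - 1)]
    rw [← CFC.complex_exp_eq_normedSpace_exp hAn,
      ← cfc_comp' Complex.exp Complex.log B Complex.continuous_exp.continuousOn hlogcont hNB]
    calc cfc (Complex.exp <| Complex.log ·) B = cfc (id : ℂ → ℂ) B := by
          refine cfc_congr fun z hz => ?_
          refine Complex.exp_log ?_
          intro h0
          rw [h0] at hz
          have := habs 0 hz
          simp at this
      _ = B := cfc_id ℂ B hNB




open ContinuousLinearMap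

/-- `exp` is injective on `{A ∈ 𝔲(m) : ‖A‖ < 1/2}`, maps it into
`{B ∈ U(m) : ‖B - Id‖ < 2 sin(1/4)}`, and every such `B` has a unique preimage there. -/
theorem stmt_2 (m : ℕ) :
    (∀ A₁ A₂ : EuclideanSpace ℂ (Fin m) →L[ℂ] EuclideanSpace ℂ (Fin m),
      ContinuousLinearMap.adjoint A₁ = -A₁ → ContinuousLinearMap.adjoint A₂ = -A₂ →
      ‖A₁‖ < 1 / 2 → ‖A₂‖ < 1 / 2 →
      NormedSpace.exp A₁ = NormedSpace.exp A₂ → A₁ = A₂) ∧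
    (∀ A : EuclideanSpace ℂ (Fin m) →L[ℂ] EuclideanSpace ℂ (Fin m),
      ContinuousLinearMap.adjoint A = -A → ‖A‖ < 1 / 2 →
      NormedSpace.exp A ∈ unitary (EuclideanSpace ℂ (Fin m) →L[ℂ] EuclideanSpace ℂ (Fin m)) ∧
      ‖NormedSpace.exp A - 1‖ < 2 * Real.sin (1 / 4)) ∧
    (∀ B ∈ unitary (EuclideanSpace ℂ (Fin m) →L[ℂ] EuclideanSpace ℂ (Fin m)),
      ‖B - 1‖ < 2 * Real.sin (1 / 4) →
      ∃! A : EuclideanSpace ℂ (Fin m) →L[ℂ] EuclideanSpace ℂ (Fin m),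
        ContinuousLinearMap.adjoint A = -A ∧ ‖A‖ < 1 / 2 ∧ NormedSpace.exp A = B) := by

  have hpi := Real.pi_gt_three
  have hsinpos : 0 < 2 * Real.sin (1 / 4) :=
    mul_pos two_pos (Real.sin_pos_of_pos_of_lt_pi (by norm_num) (by linarith))
  obtain _ | n := m
  · have hss : ∀ X Y : EuclideanSpace ℂ (Fin 0) →L[ℂ] EuclideanSpace ℂ (Fin 0), X = Y := by
      intro X Y
      ext x i
      exact i.elim0
    refine ⟨fun A₁ A₂ _ _ _ _ _ => hss _ _, fun A _ _ => ⟨?_, ?_⟩,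
      fun B _ _ => ⟨0, ⟨hss _ _, ?_, hss _ _⟩, fun A' _ => hss _ _⟩⟩
    · rw [hss (NormedSpace.exp A) 1]; exact one_mem _
    · rw [hss (NormedSpace.exp A - 1) 0, norm_zero]; exact hsinpos
    · rw [norm_zero]; norm_num
  · haveI : Nontrivial (EuclideanSpace ℂ (Fin (n + 1))) := by
      refine nontrivial_of_ne (EuclideanSpace.single 0 1) 0 fun h => ?_
      have := congrArg (· 0) h
      simp [EuclideanSpace.single_apply] at this
    refine ⟨fun A₁ A₂ h1 h2 hn1 hn2 hexp => ?_, fun A hA hn => ?_, fun B hB hBn => ?_⟩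
    · rw [← cfc_log_exp (isStarNormal_of_skew h1) hn1,
        ← cfc_log_exp (isStarNormal_of_skew h2) hn2, hexp]
    · let +nondep : NormedAlgebra ℚ (EuclideanSpace ℂ (Fin (n + 1)) →L[ℂ] EuclideanSpace ℂ (Fin (n + 1))) :=
        .restrictScalars ℚ ℂ _
      exact ⟨NormedSpace.exp_mem_unitary_of_mem_skewAdjoint
        (skewAdjoint.mem_iff.mpr (skew_star hA)), norm_exp_sub_one_lt hA hn⟩
    · obtain ⟨h1, h2, h3⟩ := part3_props hB hBn
      refine ⟨cfc Complex.log B, ⟨h1, h2, h3⟩, ?_⟩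
      rintro A' ⟨ha1, ha2, ha3⟩
      rw [← cfc_log_exp (isStarNormal_of_skew ha1) ha2, ha3]
end
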